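/- Let X be a real infinite-dimensional Banach space with a Schauder basis (x_n)_{n=1}^∞ with basis constant K and coordinate functionals (x*_n). Then sh((x*_n)) ≤ bc₂((x_n)) ≤ 2K²·sh((x*_n)), where sh((x*_n)) is computed for the basic sequence (x*_n) inside its closed linear span V. -/

import Mathlib

set_option synthInstance.maxHeartbeats 1000000
set_option maxHeartbeats 1000000
set_option linter.unusedSectionVars false


open Filter Metric NormedSpace Set Topology

noncomputable section

variable {E : Type*} [NormedAddCommGroup E] [NormedSpace ℝ E]

/-- `f` is the sequence of coordinate functionals of the Schauder basis `x`:
every vector has an expansion along `x`, and such expansions are unique. -/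
structure IsSchauderBasis (x : ℕ → E) (f : ℕ → E →L[ℝ] ℝ) : Prop where
  expand : ∀ v : E,
    Tendsto (fun n => ∑ i ∈ Finset.range n, f i v • x i) atTop (𝓝 v)
  unique : ∀ (a : ℕ → ℝ) (v : E),
    Tendsto (fun n => ∑ i ∈ Finset.range n, a i • x i) atTop (𝓝 v) → ∀ i, a i = f i v

/-- the `n`-th basis projection `P_n`. -/
def basisProj (x : ℕ → E) (f : ℕ → E →L[ℝ] ℝ) (n : ℕ) : E →L[ℝ] E :=
  ∑ i ∈ Finset.range n, (f i).smulRight (x i)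

/-- closed linear span of `{y i : i ≥ n}`. -/
def tailSpan (y : ℕ → E) (n : ℕ) : Submodule ℝ E :=
  (Submodule.span ℝ (y '' {i | n ≤ i})).topologicalClosure

/-- `‖g‖_n` : the norm of the restriction of `g` to the closed span of the tail of `y`. -/
def tailNorm (y : ℕ → E) (g : E →L[ℝ] ℝ) (n : ℕ) : ℝ :=
  ‖g.comp (tailSpan y n).subtypeL‖

/-- the quantity `sh` measuring how far a basic sequence is from being shrinking. -/
def sh (y : ℕ → E) : ℝ :=
  sSup ((fun g : E →L[ℝ] ℝ => limsup (tailNorm y g) atTop) '' {g | ‖g‖ ≤ 1})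

/-- non-symmetrised Hausdorff distance `d̂(A,B)`. -/
def hdist (A B : Set E) : ℝ := sSup ((fun a => infDist a B) '' A)

/-- ordinary distance between two sets. -/
def setDist (A B : Set E) : ℝ := sInf {d : ℝ | ∃ a ∈ A, ∃ b ∈ B, d = dist a b}

/-- `ca` measures how far a sequence is from being norm-Cauchy. -/
def ca (z : ℕ → E) : ℝ :=
  ⨅ n : ℕ, sSup {d : ℝ | ∃ k, n ≤ k ∧ ∃ l, n ≤ l ∧ d = ‖z k - z l‖}

/-- measure of non-separability. -/
def sep (A : Set E) : ℝ :=
  sInf {ε : ℝ | 0 < ε ∧ ∃ C : Set E, C.Countable ∧ ∀ a ∈ A, ∃ c ∈ C, ‖a - c‖ ≤ ε}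

/-- `V`: the closed linear span of the coordinate functionals. -/
def dualSpan (g : ℕ → E →L[ℝ] ℝ) : Submodule ℝ (StrongDual ℝ E) :=
  (Submodule.span ℝ (Set.range g)).topologicalClosure

lemma mem_dualSpan (g : ℕ → E →L[ℝ] ℝ) (i : ℕ) : g i ∈ dualSpan g :=
  Submodule.le_topologicalClosure _ (Submodule.subset_span ⟨i, rfl⟩)

/-- the quantity `bc₁` measuring non-bounded-completeness. -/
def bc1 (y : ℕ → E) : ℝ :=
  sSup {c : ℝ | ∃ a : ℕ → ℝ,
    (∀ n, ‖∑ i ∈ Finset.range n, a i • y i‖ ≤ 1) ∧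
    c = ca (fun n => ∑ i ∈ Finset.range n, a i • y i)}

/-- the quantity `bc₂`. -/
def bc2 (y : ℕ → E) (g : ℕ → E →L[ℝ] ℝ) : ℝ :=
  sSup {c : ℝ | ∃ φ : ↥(dualSpan g) →L[ℝ] ℝ,
    @norm _ (ContinuousLinearMap.hasOpNorm (E := ↥(dualSpan g)) (σ₁₂ := RingHom.id ℝ)) φ ≤ 1 ∧
    c = ca (fun n => ∑ i ∈ Finset.range n, φ ⟨g i, mem_dualSpan g i⟩ • y i)}

/-- the quantity `bc₃`. -/
def bc3 (y : ℕ → E) (g : ℕ → E →L[ℝ] ℝ) : ℝ :=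
  sSup {c : ℝ | ∃ Φ : StrongDual ℝ (StrongDual ℝ E), ‖Φ‖ ≤ 1 ∧
    c = ca (fun n => ∑ i ∈ Finset.range n, Φ (g i) • y i)}

/-- `α_Y(X)`: measures how well `Y` embeds isomorphically into `X`. -/
def alpha (Y X : Type*) [NormedAddCommGroup Y] [NormedSpace ℝ Y]
    [NormedAddCommGroup X] [NormedSpace ℝ X] : ℝ :=
  sSup {c : ℝ | ∃ T : Y →L[ℝ] X, ‖T‖ ≤ 1 ∧ ∀ y : Y, c * ‖y‖ ≤ ‖T y‖}

/-- `β_Y(X)`: measures how well `Y` embeds complementably into `X`. -/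
def beta (Y X : Type*) [NormedAddCommGroup Y] [NormedSpace ℝ Y]
    [NormedAddCommGroup X] [NormedSpace ℝ X] : ℝ :=
  sSup {c : ℝ | ∃ (A : X →L[ℝ] Y) (B : Y →L[ℝ] X),
    A.comp B = ContinuousLinearMap.id ℝ Y ∧ c * (‖A‖ * ‖B‖) ≤ 1}

/-- weak-star closure of a subset of the bidual. -/
def wstarClosure {X : Type*} [NormedAddCommGroup X] [NormedSpace ℝ X]
    (S : Set (StrongDual ℝ (StrongDual ℝ X))) : Set (StrongDual ℝ (StrongDual ℝ X)) :=
  {z | StrongDual.toWeakDual z ∈ closure (StrongDual.toWeakDual '' S)}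

/-- the measure of weak non-compactness `wk_X(A)`. -/
def wk (X : Type*) [NormedAddCommGroup X] [NormedSpace ℝ X] (A : Set X) : ℝ :=
  hdist (wstarClosure ((inclusionInDoubleDual ℝ X) '' A))
    (Set.range (inclusionInDoubleDual ℝ X))

/-- weak-star cluster points in the bidual of a sequence in `X`. -/
def wclust {X : Type*} [NormedAddCommGroup X] [NormedSpace ℝ X] (u : ℕ → X) :
    Set (StrongDual ℝ (StrongDual ℝ X)) :=
  {z | MapClusterPt (StrongDual.toWeakDual z) atTop
      (fun n => StrongDual.toWeakDual (inclusionInDoubleDual ℝ X (u n)))}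

/-- the measure of weak non-compactness `wck_X(A)`. -/
def wck (X : Type*) [NormedAddCommGroup X] [NormedSpace ℝ X] (A : Set X) : ℝ :=
  sSup {c : ℝ | ∃ u : ℕ → X, (∀ n, u n ∈ A) ∧
    c = setDist (wclust u) (Set.range (inclusionInDoubleDual ℝ X))}


/-- the canonical map `j : X → V*` for a subspace `V` of the dual,
`⟨j v, x*⟩ = x*(v)`. -/
def jfun {X : Type*} [NormedAddCommGroup X] [NormedSpace ℝ X]
    (V : Submodule ℝ (StrongDual ℝ X)) (v : X) : ↥V →L[ℝ] ℝ :=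
  (inclusionInDoubleDual ℝ X v).comp V.subtypeL

/-- the space `ℓ₁` of absolutely summable real sequences. -/
abbrev ell1 : Type := lp (fun _ : ℕ => ℝ) 1

/-- the space `c₀` of real sequences converging to zero, with the sup norm. -/
abbrev czero : Type := ZeroAtInftyContinuousMap ℕ ℝ

end

noncomputable section Aux

variable {X : Type*} [NormedAddCommGroup X] [NormedSpace ℝ X]

/-- the operator-norm group structure on the continuous dual of a real normed space. -/
abbrev clmNAG (E : Type*) [NormedAddCommGroup E] [NormedSpace ℝ E] :
    NormedAddCommGroup (E →L[ℝ] ℝ) :=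
  ContinuousLinearMap.toNormedAddCommGroup

/-- the operator-norm space structure on the continuous dual of a real normed space. -/
abbrev clmNS (E : Type*) [NormedAddCommGroup E] [NormedSpace ℝ E] :
    NormedSpace ℝ (E →L[ℝ] ℝ) :=
  ContinuousLinearMap.toNormedSpace

instance dualSpanCLM_normedAddCommGroup (f : ℕ → X →L[ℝ] ℝ) :
    NormedAddCommGroup (↥(dualSpan f) →L[ℝ] ℝ) :=
  clmNAG ↥(dualSpan f)

instance dualSpanCLM_normedSpace (f : ℕ → X →L[ℝ] ℝ) :
    NormedSpace ℝ (↥(dualSpan f) →L[ℝ] ℝ) :=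
  clmNS ↥(dualSpan f)

instance dualSpan_continuousAdd (f : ℕ → X →L[ℝ] ℝ) : ContinuousAdd ↥(dualSpan f) :=
  (SeminormedAddCommGroup.toIsTopologicalAddGroup (E := ↥(dualSpan f))).toContinuousAdd

lemma basisProj_apply (x : ℕ → X) (f : ℕ → X →L[ℝ] ℝ) (n : ℕ) (v : X) :
    basisProj x f n v = ∑ i ∈ Finset.range n, f i v • x i := by
  simp [basisProj]

lemma schauder_delta {x : ℕ → X} {f : ℕ → X →L[ℝ] ℝ}
    (hb : IsSchauderBasis x f) (i j : ℕ) :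
    f i (x j) = if i = j then 1 else 0 := by
  refine (hb.unique (fun i => if i = j then 1 else 0) (x j) ?_ i).symm
  refine Tendsto.congr' ?_ tendsto_const_nhds
  filter_upwards [eventually_ge_atTop (j + 1)] with n hn
  rw [Finset.sum_eq_single j]
  · simp
  · intro b _ hbj; simp [hbj]
  · intro h; exact absurd (Finset.mem_range.2 hn) h

lemma tailNorm_antitone (y : ℕ → X) (g : X →L[ℝ] ℝ) : Antitone (tailNorm y g) := by
  intro m n hmn
  have hsub : tailSpan y n ≤ tailSpan y m :=
    Submodule.topologicalClosure_mono
      (Submodule.span_mono (Set.image_mono (fun i hi => hmn.trans hi)))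
  refine ContinuousLinearMap.opNorm_le_bound _
    (norm_nonneg (g.comp (tailSpan y m).subtypeL)) (fun v => ?_)
  have : (g.comp (tailSpan y n).subtypeL) v
      = (g.comp (tailSpan y m).subtypeL) ⟨(v : X), hsub v.2⟩ := rfl
  rw [this]
  exact (g.comp (tailSpan y m).subtypeL).le_opNorm _

lemma tailNorm_le (y : ℕ → X) (g : X →L[ℝ] ℝ) (n : ℕ) : tailNorm y g n ≤ ‖g‖ := by
  refine ContinuousLinearMap.opNorm_le_bound _ (norm_nonneg g) (fun v => ?_)
  exact g.le_opNorm _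

lemma tailNorm_nonneg (y : ℕ → X) (g : X →L[ℝ] ℝ) (n : ℕ) : 0 ≤ tailNorm y g n :=
  norm_nonneg (g.comp (tailSpan y n).subtypeL)

lemma mem_tailSpan_apply_le (y : ℕ → X) (g : X →L[ℝ] ℝ) (n : ℕ) {v : X}
    (hv : v ∈ tailSpan y n) : ‖g v‖ ≤ tailNorm y g n * ‖v‖ :=
  (g.comp (tailSpan y n).subtypeL).le_opNorm ⟨v, hv⟩

variable (x : ℕ → X) (f : ℕ → X →L[ℝ] ℝ)

/-- the coordinate functionals as elements of `V`. -/
def yv : ℕ → ↥(dualSpan f) := fun i => ⟨f i, mem_dualSpan f i⟩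

lemma key_identity (φ : ↥(dualSpan f) →L[ℝ] ℝ) (s : Finset ℕ) (ξ : StrongDual ℝ X) :
    ξ (∑ i ∈ s, φ (yv f i) • x i) = φ (∑ i ∈ s, ξ (x i) • yv f i) := by
  rw [map_sum, map_sum]
  refine Finset.sum_congr rfl fun i _ => ?_
  rw [map_smul, map_smul]
  simp [mul_comm]

lemma coe_sum_smul (ξ : StrongDual ℝ X) (s : Finset ℕ) :
    ((∑ i ∈ s, ξ (x i) • yv f i : ↥(dualSpan f)) : StrongDual ℝ X)
      = ∑ i ∈ s, ξ (x i) • f i := by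
  simp [yv]

lemma Q_eq (ξ : StrongDual ℝ X) (m : ℕ) :
    (∑ i ∈ Finset.range m, ξ (x i) • f i) = ξ.comp (basisProj x f m) := by
  ext v
  simp only [ContinuousLinearMap.coe_sum', Finset.sum_apply,
    ContinuousLinearMap.coe_smul', Pi.smul_apply, ContinuousLinearMap.coe_comp',
    Function.comp_apply, basisProj_apply, map_sum, map_smul]
  exact Finset.sum_congr rfl fun i _ => by simp [mul_comm]

lemma norm_Q_le {K : ℝ} (hKP : ∀ n, ‖basisProj x f n‖ ≤ K) (ξ : StrongDual ℝ X) (m : ℕ) :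
    ‖(∑ i ∈ Finset.range m, ξ (x i) • yv f i : ↥(dualSpan f))‖ ≤ ‖ξ‖ * K := by
  have h1 : ‖(∑ i ∈ Finset.range m, ξ (x i) • yv f i : ↥(dualSpan f))‖
      = ‖(∑ i ∈ Finset.range m, ξ (x i) • f i : StrongDual ℝ X)‖ := by
    rw [← coe_sum_smul]; rfl
  rw [h1, Q_eq]
  calc ‖ξ.comp (basisProj x f m)‖ ≤ ‖ξ‖ * ‖basisProj x f m‖ :=
        ContinuousLinearMap.opNorm_comp_le _ _
    _ ≤ ‖ξ‖ * K := mul_le_mul_of_nonneg_left (hKP m) (norm_nonneg _)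

lemma S_bound {K : ℝ} (hKP : ∀ n, ‖basisProj x f n‖ ≤ K)
    (φ : ↥(dualSpan f) →L[ℝ] ℝ) (m : ℕ) :
    ‖∑ i ∈ Finset.range m, φ (yv f i) • x i‖ ≤ K * ‖φ‖ := by
  have hK0 : 0 ≤ K := (norm_nonneg _).trans (hKP 0)
  refine norm_le_dual_bound ℝ _ (mul_nonneg hK0 (norm_nonneg φ)) (fun ξ => ?_)
  rw [key_identity]
  calc ‖φ (∑ i ∈ Finset.range m, ξ (x i) • yv f i)‖
      ≤ ‖φ‖ * ‖(∑ i ∈ Finset.range m, ξ (x i) • yv f i : ↥(dualSpan f))‖ :=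
        ContinuousLinearMap.le_opNorm (E := ↥(dualSpan f)) (σ₁₂ := RingHom.id ℝ) φ _
    _ ≤ ‖φ‖ * (‖ξ‖ * K) := mul_le_mul_of_nonneg_left (norm_Q_le x f hKP ξ m) (norm_nonneg φ)
    _ = K * ‖φ‖ * ‖ξ‖ := by ring

lemma sum_Ico_mem_tailSpan (ξ : StrongDual ℝ X) (l k : ℕ) :
    (∑ i ∈ Finset.Ico l k, ξ (x i) • yv f i) ∈ tailSpan (yv f) l := by
  refine Submodule.sum_mem _ (fun i hi => Submodule.smul_mem _ _ ?_)
  exact Submodule.le_topologicalClosure _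
    (Submodule.subset_span ⟨i, (Finset.mem_Ico.mp hi).1, rfl⟩)

lemma diff_bound {K : ℝ} (hKP : ∀ n, ‖basisProj x f n‖ ≤ K)
    (φ : ↥(dualSpan f) →L[ℝ] ℝ) {l k : ℕ} (hlk : l ≤ k) :
    ‖(∑ i ∈ Finset.range k, φ (yv f i) • x i)
      - ∑ i ∈ Finset.range l, φ (yv f i) • x i‖
      ≤ 2 * K * tailNorm (yv f) φ l := by
  have hK0 : 0 ≤ K := (norm_nonneg _).trans (hKP 0)
  refine norm_le_dual_bound ℝ _
    (mul_nonneg (mul_nonneg (by norm_num) hK0) (tailNorm_nonneg _ _ _)) (fun ξ => ?_)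
  have hsum : (∑ i ∈ Finset.range k, φ (yv f i) • x i)
      - ∑ i ∈ Finset.range l, φ (yv f i) • x i
      = ∑ i ∈ Finset.Ico l k, φ (yv f i) • x i :=
    (Finset.sum_Ico_eq_sub _ hlk).symm
  rw [hsum, key_identity]
  have hmem := sum_Ico_mem_tailSpan x f ξ l k
  have hw : (∑ i ∈ Finset.Ico l k, ξ (x i) • yv f i)
      = (∑ i ∈ Finset.range k, ξ (x i) • yv f i)
        - ∑ i ∈ Finset.range l, ξ (x i) • yv f i :=
    Finset.sum_Ico_eq_sub (fun i => ξ (x i) • yv f i) hlk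
  have hnw : ‖(∑ i ∈ Finset.Ico l k, ξ (x i) • yv f i : ↥(dualSpan f))‖
      ≤ 2 * K * ‖ξ‖ := by
    rw [hw]
    calc ‖(∑ i ∈ Finset.range k, ξ (x i) • yv f i : ↥(dualSpan f))
          - ∑ i ∈ Finset.range l, ξ (x i) • yv f i‖
        ≤ ‖(∑ i ∈ Finset.range k, ξ (x i) • yv f i : ↥(dualSpan f))‖
          + ‖(∑ i ∈ Finset.range l, ξ (x i) • yv f i : ↥(dualSpan f))‖ :=
          norm_sub_le (E := ↥(dualSpan f)) _ _
      _ ≤ ‖ξ‖ * K + ‖ξ‖ * K :=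
          add_le_add (norm_Q_le x f hKP ξ k) (norm_Q_le x f hKP ξ l)
      _ = 2 * K * ‖ξ‖ := by ring
  calc ‖φ (∑ i ∈ Finset.Ico l k, ξ (x i) • yv f i)‖
      ≤ tailNorm (yv f) φ l * ‖(∑ i ∈ Finset.Ico l k, ξ (x i) • yv f i : ↥(dualSpan f))‖ :=
        mem_tailSpan_apply_le _ _ _ hmem
    _ ≤ tailNorm (yv f) φ l * (2 * K * ‖ξ‖) :=
        mul_le_mul_of_nonneg_left hnw (tailNorm_nonneg _ _ _)
    _ = 2 * K * tailNorm (yv f) φ l * ‖ξ‖ := by ring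

end Aux

noncomputable section Aux2

variable {X : Type*} [NormedAddCommGroup X] [NormedSpace ℝ X]
variable (x : ℕ → X) (f : ℕ → X →L[ℝ] ℝ)

lemma span_repr (hb : IsSchauderBasis x f) (n : ℕ) {w : ↥(dualSpan f)}
    (hw : w ∈ Submodule.span ℝ (yv f '' {i | n ≤ i})) :
    ∀ᶠ m in Filter.atTop,
      ∑ i ∈ Finset.Ico n m, ((w : StrongDual ℝ X) (x i)) • yv f i = w := by
  induction hw using Submodule.span_induction with
  | mem w hwmem =>
      obtain ⟨j, hj, rfl⟩ := hwmem
      filter_upwards [Filter.eventually_ge_atTop (j + 1)] with m hm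
      rw [Finset.sum_eq_single j]
      · have : ((yv f j : StrongDual ℝ X)) (x j) = 1 := by
          simp [yv, schauder_delta hb j j]
        rw [this, one_smul]
      · intro b hbmem hbj
        have : ((yv f j : StrongDual ℝ X)) (x b) = 0 := by
          simp only [yv]
          rw [schauder_delta hb j b]
          simp [Ne.symm hbj]
        rw [this, zero_smul]
      · intro hj'
        exact absurd (Finset.mem_Ico.mpr ⟨hj, hm⟩) hj'
  | zero => simp
  | add u v hu hv ihu ihv =>
      filter_upwards [ihu, ihv] with m h1 h2
      simp only [Submodule.coe_add, ContinuousLinearMap.add_apply, add_smul,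
        Finset.sum_add_distrib, h1, h2]
  | smul a u hu ihu =>
      filter_upwards [ihu] with m h1
      simp only [Submodule.coe_smul, ContinuousLinearMap.smul_apply, smul_eq_mul,
        mul_smul, ← Finset.smul_sum, h1]

lemma tailNorm_le_D (hb : IsSchauderBasis x f) (φ : ↥(dualSpan f) →L[ℝ] ℝ)
    {n : ℕ} {C : ℝ} (hC0 : 0 ≤ C)
    (hC : ∀ m, n ≤ m →
      ‖(∑ i ∈ Finset.range m, φ (yv f i) • x i)
        - ∑ i ∈ Finset.range n, φ (yv f i) • x i‖ ≤ C) :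
    tailNorm (yv f) φ n ≤ C := by
  refine ContinuousLinearMap.opNorm_le_bound _ hC0 (fun v => ?_)
  obtain ⟨w, hwmem⟩ := v
  show ‖φ w‖ ≤ C * ‖w‖
  have hcl : w ∈ closure
      ((Submodule.span ℝ (yv f '' {i | n ≤ i}) : Submodule ℝ ↥(dualSpan f)) : Set ↥(dualSpan f)) := by
    rw [← Submodule.topologicalClosure_coe]; exact hwmem
  have hset : IsClosed {u : ↥(dualSpan f) | ‖φ u‖ ≤ C * ‖u‖} :=
    isClosed_le (φ.continuous.norm) (continuous_const.mul (continuous_norm (E := ↥(dualSpan f))))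
  refine closure_minimal (fun u hu => ?_) hset hcl
  obtain ⟨m, heq, hm⟩ :=
    ((span_repr x f hb n hu).and (Filter.eventually_ge_atTop n)).exists
  have hid := key_identity x f φ (Finset.Ico n m) (u : StrongDual ℝ X)
  rw [heq] at hid
  have hsum : (∑ i ∈ Finset.Ico n m, φ (yv f i) • x i)
      = (∑ i ∈ Finset.range m, φ (yv f i) • x i)
        - ∑ i ∈ Finset.range n, φ (yv f i) • x i :=
    Finset.sum_Ico_eq_sub _ hm
  show ‖φ u‖ ≤ C * ‖u‖
  rw [← hid, hsum]
  calc ‖(u : StrongDual ℝ X) ((∑ i ∈ Finset.range m, φ (yv f i) • x i)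
        - ∑ i ∈ Finset.range n, φ (yv f i) • x i)‖
      ≤ ‖(u : StrongDual ℝ X)‖ * ‖(∑ i ∈ Finset.range m, φ (yv f i) • x i)
        - ∑ i ∈ Finset.range n, φ (yv f i) • x i‖ :=
        (u : StrongDual ℝ X).le_opNorm _
    _ ≤ ‖(u : StrongDual ℝ X)‖ * C :=
        mul_le_mul_of_nonneg_left (hC m hm) (norm_nonneg _)
    _ = C * ‖u‖ := by rw [mul_comm]; rfl

lemma ca_zero : ca (fun _ : ℕ => (0 : X)) = 0 := by
  have : ∀ n : ℕ, {d : ℝ | ∃ k, n ≤ k ∧ ∃ l, n ≤ l ∧ d = ‖(0 : X) - 0‖} = {0} := by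
    intro n
    ext d
    constructor
    · rintro ⟨k, _, l, _, rfl⟩; simp
    · rintro rfl; exact ⟨n, le_rfl, n, le_rfl, by simp⟩
  simp only [ca, this, csSup_singleton, ciInf_const]

end Aux2

noncomputable section Main

open Filter

variable {X : Type*} [NormedAddCommGroup X] [NormedSpace ℝ X]

lemma ca_def (z : ℕ → X) :
    ca z = ⨅ n : ℕ, sSup {d : ℝ | ∃ k, n ≤ k ∧ ∃ l, n ≤ l ∧ d = ‖z k - z l‖} := rfl

lemma main_ineq (x : ℕ → X) (f : ℕ → X →L[ℝ] ℝ) (hb : IsSchauderBasis x f) {K : ℝ}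
    (hKP : ∀ n, ‖basisProj x f n‖ ≤ K) (hK1 : 1 ≤ K) :
    sh (yv f) ≤ bc2 x f ∧ bc2 x f ≤ 2 * K ^ 2 * sh (yv f) := by
  classical
  set y := yv f with hy
  set S : (↥(dualSpan f) →L[ℝ] ℝ) → ℕ → X :=
    fun φ n => ∑ i ∈ Finset.range n, φ (yv f i) • x i with hS
  have hK0 : (0:ℝ) ≤ K := zero_le_one.trans hK1
  have hDbdd : ∀ (φ : ↥(dualSpan f) →L[ℝ] ℝ), ‖φ‖ ≤ 1 → ∀ n : ℕ,
      ∀ d ∈ {d : ℝ | ∃ k, n ≤ k ∧ ∃ l, n ≤ l ∧ d = ‖S φ k - S φ l‖}, d ≤ 2 * K := by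
    rintro φ hφ n d ⟨k, hk, l, hl, rfl⟩
    calc ‖S φ k - S φ l‖ ≤ ‖S φ k‖ + ‖S φ l‖ := norm_sub_le _ _
      _ ≤ K * ‖φ‖ + K * ‖φ‖ := add_le_add (S_bound x f hKP φ k) (S_bound x f hKP φ l)
      _ ≤ K * 1 + K * 1 :=
          add_le_add (mul_le_mul_of_nonneg_left hφ hK0) (mul_le_mul_of_nonneg_left hφ hK0)
      _ = 2 * K := by ring
  have hDBddAbove : ∀ (φ : ↥(dualSpan f) →L[ℝ] ℝ), ‖φ‖ ≤ 1 → ∀ n : ℕ,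
      BddAbove {d : ℝ | ∃ k, n ≤ k ∧ ∃ l, n ≤ l ∧ d = ‖S φ k - S φ l‖} :=
    fun φ hφ n => ⟨2 * K, fun d hd => hDbdd φ hφ n d hd⟩
  have hmem0 : ∀ (φ : ↥(dualSpan f) →L[ℝ] ℝ) (n : ℕ),
      (0:ℝ) ∈ {d : ℝ | ∃ k, n ≤ k ∧ ∃ l, n ≤ l ∧ d = ‖S φ k - S φ l‖} :=
    fun φ n => ⟨n, le_rfl, n, le_rfl, by simp⟩
  have hD0 : ∀ (φ : ↥(dualSpan f) →L[ℝ] ℝ), ‖φ‖ ≤ 1 → ∀ n : ℕ,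
      0 ≤ sSup {d : ℝ | ∃ k, n ≤ k ∧ ∃ l, n ≤ l ∧ d = ‖S φ k - S φ l‖} :=
    fun φ hφ n => le_csSup (hDBddAbove φ hφ n) (hmem0 φ n)
  have hcaD : ∀ (φ : ↥(dualSpan f) →L[ℝ] ℝ), ‖φ‖ ≤ 1 → ∀ n : ℕ,
      ca (S φ) ≤ sSup {d : ℝ | ∃ k, n ≤ k ∧ ∃ l, n ≤ l ∧ d = ‖S φ k - S φ l‖} := by
    intro φ hφ n
    rw [ca_def]
    exact ciInf_le ⟨0, by rintro r ⟨m, rfl⟩; exact hD0 φ hφ m⟩ n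
  -- bc2 set facts
  have hbc2bdd : BddAbove {c : ℝ | ∃ φ : ↥(dualSpan f) →L[ℝ] ℝ, ‖φ‖ ≤ 1 ∧
      c = ca (fun n => ∑ i ∈ Finset.range n, φ ⟨f i, mem_dualSpan f i⟩ • x i)} := by
    refine ⟨2 * K, ?_⟩
    rintro c ⟨φ, hφ, rfl⟩
    have h1 : ca (S φ) ≤ 2 * K :=
      (hcaD φ hφ 0).trans (Real.sSup_le (hDbdd φ hφ 0) (by linarith))
    exact h1
  have hbc2mem0 : (0:ℝ) ∈ {c : ℝ | ∃ φ : ↥(dualSpan f) →L[ℝ] ℝ, ‖φ‖ ≤ 1 ∧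
      c = ca (fun n => ∑ i ∈ Finset.range n, φ ⟨f i, mem_dualSpan f i⟩ • x i)} := by
    refine ⟨0, by exact le_trans (le_of_eq ContinuousLinearMap.opNorm_zero) zero_le_one, ?_⟩
    have h1 : (fun n => ∑ i ∈ Finset.range n,
        (0 : ↥(dualSpan f) →L[ℝ] ℝ) ⟨f i, mem_dualSpan f i⟩ • x i) = fun _ => (0:X) := by
      funext n; simp
    rw [h1, ca_zero]
  have hbc2_nonneg : 0 ≤ bc2 x f := le_csSup hbc2bdd hbc2mem0
  -- sh set facts
  have hcobdd : ∀ g : ↥(dualSpan f) →L[ℝ] ℝ,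
      IsCoboundedUnder (· ≤ ·) atTop (tailNorm y g) :=
    fun g => IsBoundedUnder.isCoboundedUnder_le
      (isBoundedUnder_of ⟨0, fun n => (tailNorm_nonneg y g n :)⟩)
  have hbddU : ∀ g : ↥(dualSpan f) →L[ℝ] ℝ,
      IsBoundedUnder (· ≤ ·) atTop (tailNorm y g) :=
    fun g => isBoundedUnder_of ⟨‖g‖, fun n => (tailNorm_le y g n :)⟩
  have hshbdd : BddAbove ((fun g : ↥(dualSpan f) →L[ℝ] ℝ =>
      limsup (tailNorm y g) atTop) '' {g | ‖g‖ ≤ 1}) := by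
    refine ⟨1, ?_⟩
    rintro c ⟨g, hg, rfl⟩
    exact limsup_le_of_le (hcobdd g)
      (Eventually.of_forall fun n => ((tailNorm_le y g n).trans hg :))
  have hshmem0 : (0:ℝ) ∈ ((fun g : ↥(dualSpan f) →L[ℝ] ℝ =>
      limsup (tailNorm y g) atTop) '' {g | ‖g‖ ≤ 1}) := by
    refine ⟨0, by exact le_trans (le_of_eq ContinuousLinearMap.opNorm_zero) zero_le_one, ?_⟩
    show limsup (tailNorm y (0 : ↥(dualSpan f) →L[ℝ] ℝ)) atTop = 0
    have h0 : tailNorm y (0 : ↥(dualSpan f) →L[ℝ] ℝ) = fun _ => (0:ℝ) := by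
      funext n; simp [tailNorm]
      exact ContinuousLinearMap.opNorm_zero
    rw [h0]
    exact limsup_const 0
  have hsh_nonneg : 0 ≤ sh y := le_csSup hshbdd hshmem0
  constructor
  · -- sh ≤ bc2
    refine Real.sSup_le ?_ hbc2_nonneg
    rintro c ⟨φ, hφ, rfl⟩
    have h1 : limsup (tailNorm y φ) atTop ≤ ca (S φ) := by
      rw [ca_def]
      refine le_ciInf fun n => ?_
      have h2 : limsup (tailNorm y φ) atTop ≤ tailNorm y φ n :=
        limsup_le_of_le (hcobdd φ)
          ((eventually_ge_atTop n).mono fun m hm => (tailNorm_antitone y φ hm :))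
      refine h2.trans ?_
      refine tailNorm_le_D x f hb φ (hD0 φ hφ n) fun m hm => ?_
      exact le_csSup (hDBddAbove φ hφ n) ⟨m, hm, n, le_rfl, rfl⟩
    exact h1.trans (le_csSup hbc2bdd ⟨φ, hφ, rfl⟩)
  · -- bc2 ≤ 2K²·sh
    refine Real.sSup_le ?_ (by nlinarith)
    rintro c ⟨φ, hφ, rfl⟩
    have hLsh : limsup (tailNorm y φ) atTop ≤ sh y := le_csSup hshbdd ⟨φ, hφ, rfl⟩
    set L := limsup (tailNorm y φ) atTop with hLdef
    have key : ∀ ε : ℝ, 0 < ε → ca (S φ) ≤ 2 * K * L + ε := by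
      intro ε hε
      have h2K : (0:ℝ) < 2 * K := by linarith
      have hεK : 0 < ε / (2 * K) := div_pos hε h2K
      have hlt : L < L + ε / (2 * K) := lt_add_of_pos_right _ hεK
      obtain ⟨n, hn⟩ := (eventually_lt_of_limsup_lt hlt (hbddU φ)).exists
      have h0n : 0 ≤ L + ε / (2 * K) := le_trans (tailNorm_nonneg y φ n :) hn.le
      have hD_le : sSup {d : ℝ | ∃ k, n ≤ k ∧ ∃ l, n ≤ l ∧ d = ‖S φ k - S φ l‖}
          ≤ 2 * K * (L + ε / (2 * K)) := by
        refine Real.sSup_le ?_ (mul_nonneg h2K.le h0n)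
        rintro d ⟨k, hk, l, hl, rfl⟩
        rcases le_total l k with h | h
        · calc ‖S φ k - S φ l‖ ≤ 2 * K * tailNorm y φ l := diff_bound x f hKP φ h
            _ ≤ 2 * K * tailNorm y φ n :=
                mul_le_mul_of_nonneg_left (tailNorm_antitone y φ hl :) h2K.le
            _ ≤ 2 * K * (L + ε / (2 * K)) := mul_le_mul_of_nonneg_left hn.le h2K.le
        · rw [norm_sub_rev]
          calc ‖S φ l - S φ k‖ ≤ 2 * K * tailNorm y φ k := diff_bound x f hKP φ h
            _ ≤ 2 * K * tailNorm y φ n :=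
                mul_le_mul_of_nonneg_left (tailNorm_antitone y φ hk :) h2K.le
            _ ≤ 2 * K * (L + ε / (2 * K)) := mul_le_mul_of_nonneg_left hn.le h2K.le
      have heq : 2 * K * (L + ε / (2 * K)) = 2 * K * L + ε := by
        field_simp
      linarith [(hcaD φ hφ n).trans hD_le]
    have hca2KL : ca (S φ) ≤ 2 * K * L := by
      by_contra hcon
      push_neg at hcon
      have := key ((ca (S φ) - 2 * K * L) / 2) (by linarith)
      linarith
    calc ca (S φ) ≤ 2 * K * L := hca2KL
      _ ≤ 2 * K * sh y := mul_le_mul_of_nonneg_left hLsh (by linarith)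
      _ ≤ 2 * K ^ 2 * sh y :=
          mul_le_mul_of_nonneg_right (by nlinarith : 2 * K ≤ 2 * K ^ 2) hsh_nonneg

end Main

/-- Theorem 4.5: `sh((x*ₙ)) ≤ bc₂((xₙ)) ≤ 2K²·sh((x*ₙ))`, where the
basic sequence `(x*ₙ)` is regarded as a sequence in its closed linear span `V`. -/
theorem sh_dual_le_bc2_le {X : Type*} [NormedAddCommGroup X] [NormedSpace ℝ X]
    [CompleteSpace X] (hinf : ¬ FiniteDimensional ℝ X)
    (x : ℕ → X) (f : ℕ → X →L[ℝ] ℝ) (hb : IsSchauderBasis x f)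
    (K : ℝ) (hK : K = ⨆ n : ℕ, ‖basisProj x f n‖) :
    sh (fun i => (⟨f i, mem_dualSpan f i⟩ : ↥(dualSpan f))) ≤ bc2 x f ∧
    bc2 x f ≤ 2 * K ^ 2 * sh (fun i => (⟨f i, mem_dualSpan f i⟩ : ↥(dualSpan f))) := by
  --
  have hten : ∀ v : X, Filter.Tendsto (fun n => basisProj x f n v)
      Filter.atTop (nhds v) := by
    intro v
    refine (hb.expand v).congr fun n => ?_
    exact (basisProj_apply x f n v).symm
  have hpt : ∀ v : X, ∃ C, ∀ n : ℕ, ‖basisProj x f n v‖ ≤ C := by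
    intro v
    obtain ⟨C, hC⟩ := ((hten v).norm).bddAbove_range
    exact ⟨C, fun i => hC ⟨i, rfl⟩⟩
  obtain ⟨C', hC'⟩ := banach_steinhaus hpt
  have hbdd : BddAbove (Set.range fun n => ‖basisProj x f n‖) :=
    ⟨C', by rintro r ⟨n, rfl⟩; exact hC' n⟩
  have hKP : ∀ n, ‖basisProj x f n‖ ≤ K := fun n => hK ▸ le_ciSup hbdd n
  have hnt : Nontrivial X := by
    by_contra h
    rw [not_nontrivial_iff_subsingleton] at h
    exact hinf (inferInstance : FiniteDimensional ℝ X)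
  obtain ⟨v, hv⟩ := exists_ne (0 : X)
  have hnv : ‖v‖ ≤ K * ‖v‖ :=
    le_of_tendsto (hten v).norm (Filter.Eventually.of_forall fun n =>
      ((basisProj x f n).le_opNorm v).trans
        (mul_le_mul_of_nonneg_right (hKP n) (norm_nonneg v)))
  have hK1 : 1 ≤ K := by
    have hv0 : 0 < ‖v‖ := norm_pos_iff.mpr hv
    nlinarith
  exact main_ineq x f hb hKP hK1
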